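/- Let X = {−n,…,n}, H(x) = −|x|, π_β(x) ∝ e^{−βH(x)}, β > 0, let P_β be the Metropolis–Hastings chain for π_β with nearest-neighbor proposal, and G = {e,g} with gx = −x. Let K := (1/2)P_β + (1/4)U_g P_β + (1/4) P_β U_g be the independent double average. Then the right spectral gap of K satisfies λ(K) ≥ (1 − e^{−β})/(36 n³). -/
import Mathlib


open Matrix

/-- The state space `⟦-n, n⟧ ⊆ ℤ`. -/
abbrev VState (n : ℕ) : Type := ↥(Set.Icc (-(n : ℤ)) (n : ℤ))

/-- The V-shaped Hamiltonian `H(x) = -|x|`. -/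
noncomputable def vH {n : ℕ} (x : VState n) : ℝ := -|((x : ℤ) : ℝ)|

/-- The Gibbs distribution `π_β(x) ∝ exp(-β H(x))`. -/
noncomputable def vGibbs (n : ℕ) (β : ℝ) (x : VState n) : ℝ :=
  Real.exp (-β * vH x) / ∑ z : VState n, Real.exp (-β * vH z)

/-- Off-diagonal Metropolis transition rates for the nearest-neighbour proposal:
`P_β(x, x±1) = (1/2) exp(-β (H(x±1) - H(x))₊)`. -/
noncomputable def vProp (n : ℕ) (β : ℝ) (x y : VState n) : ℝ :=
  if (y : ℤ) = (x : ℤ) + 1 ∨ (y : ℤ) = (x : ℤ) - 1 then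
    (1 / 2) * Real.exp (-β * max (vH y - vH x) 0)
  else 0

/-- The Metropolis–Hastings kernel `P_β`, with diagonal entries filling each row. -/
noncomputable def vMH (n : ℕ) (β : ℝ) : Matrix (VState n) (VState n) ℝ :=
  fun x y => if y = x then 1 - ∑ z, vProp n β x z else vProp n β x y

/-- The permutation matrix of the flip `g : x ↦ -x`. -/
noncomputable def vFlip (n : ℕ) : Matrix (VState n) (VState n) ℝ :=
  fun x y => if (y : ℤ) = -(x : ℤ) then 1 else 0

/-- The independent double average `K = (1/2) P_β + (1/4) U_g P_β + (1/4) P_β U_g`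
with respect to `G = {e, g}`. -/
noncomputable def vK (n : ℕ) (β : ℝ) : Matrix (VState n) (VState n) ℝ :=
  (1 / 2 : ℝ) • vMH n β + (1 / 4 : ℝ) • (vFlip n * vMH n β) +
    (1 / 4 : ℝ) • (vMH n β * vFlip n)


namespace S17

variable {n : ℕ} {β : ℝ}

def sg (x : VState n) : VState n :=
  ⟨-(x : ℤ), by
    obtain ⟨v, hv⟩ := x
    simp only [Set.mem_Icc] at hv ⊢
    omega⟩

@[simp] lemma coe_sg (x : VState n) : ((sg x : VState n) : ℤ) = -(x : ℤ) := rfl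

lemma sg_invol : Function.Involutive (sg (n := n)) := fun x => by
  apply Subtype.ext; simp

def sgE : Equiv.Perm (VState n) := Function.Involutive.toPerm _ sg_invol

@[simp] lemma sgE_apply (x : VState n) : sgE x = sg x := rfl

lemma vH_sg (x : VState n) : vH (sg x) = vH x := by
  simp [vH]

def stu (n : ℕ) (k : ℕ) : VState n :=
  ⟨min (k : ℤ) n, by simp only [Set.mem_Icc]; omega⟩

lemma coe_stu {k : ℕ} (hk : k ≤ n) : ((stu n k : VState n) : ℤ) = k := by
  simp only [stu]; omega

lemma natAbs_le (x : VState n) : (x : ℤ).natAbs ≤ n := by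
  obtain ⟨v, hv⟩ := x
  simp only [Set.mem_Icc] at hv
  simp; omega

lemma vProp_self (x : VState n) : vProp n β x x = 0 := by
  rw [vProp, if_neg]; omega

lemma vProp_nonneg (x y : VState n) : 0 ≤ vProp n β x y := by
  rw [vProp]; split
  · positivity
  · exact le_refl 0

lemma vProp_sg (x y : VState n) : vProp n β (sg x) (sg y) = vProp n β x y := by
  unfold vProp
  rw [vH_sg, vH_sg]
  refine if_congr ?_ rfl rfl
  simp only [coe_sg]; omega

lemma rowsum (x : VState n) : ∑ y, vMH n β x y = 1 := by
  classical
  rw [← Finset.sum_erase_add _ _ (Finset.mem_univ x)]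
  have h1 : ∑ y ∈ Finset.univ.erase x, vMH n β x y
      = ∑ y ∈ Finset.univ.erase x, vProp n β x y := by
    refine Finset.sum_congr rfl fun y hy => ?_
    rw [vMH, if_neg (Finset.ne_of_mem_erase hy)]
  have h2 : ∑ y ∈ Finset.univ.erase x, vProp n β x y = ∑ y, vProp n β x y :=
    Finset.sum_erase _ (vProp_self x)
  rw [h1, h2, vMH, if_pos rfl]; ring

lemma vMH_sg (x y : VState n) : vMH n β (sg x) (sg y) = vMH n β x y := by
  unfold vMH
  have h1 : (sg y = sg x) ↔ (y = x) := sg_invol.injective.eq_iff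
  have h2 : ∑ z, vProp n β (sg x) z = ∑ z, vProp n β x z := by
    rw [← Equiv.sum_comp sgE (fun z => vProp n β (sg x) z)]
    exact Finset.sum_congr rfl fun z _ => by simpa using vProp_sg x z
  by_cases h : y = x
  · rw [if_pos (h1.mpr h), if_pos h, h2]
  · rw [if_neg fun hc => h (h1.mp hc), if_neg h]; exact vProp_sg x y

lemma db_core (β a b : ℝ) :
    Real.exp (-β * a) * Real.exp (-β * max (b - a) 0) =
    Real.exp (-β * b) * Real.exp (-β * max (a - b) 0) := by
  rw [← Real.exp_add, ← Real.exp_add]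
  congr 1
  rcases le_total a b with h | h
  · rw [max_eq_left (by linarith), max_eq_right (by linarith)]; ring
  · rw [max_eq_right (by linarith), max_eq_left (by linarith)]; ring

/-- detailed balance for the unnormalized weights -/
lemma db_w (x y : VState n) :
    Real.exp (-β * vH x) * vMH n β x y = Real.exp (-β * vH y) * vMH n β y x := by
  by_cases h : y = x
  · subst h; rfl
  · rw [vMH, if_neg h, vMH, if_neg fun hc => h (hc.symm)]
    unfold vProp
    by_cases hc : (y : ℤ) = (x : ℤ) + 1 ∨ (y : ℤ) = (x : ℤ) - 1
    · rw [if_pos hc, if_pos (by omega)]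
      have := db_core β (vH x) (vH y)
      ring_nf
      ring_nf at this
      linarith
    · rw [if_neg hc, if_neg (by omega)]
      ring

lemma db (x y : VState n) :
    vGibbs n β x * vMH n β x y = vGibbs n β y * vMH n β y x := by
  unfold vGibbs
  rw [div_mul_eq_mul_div, div_mul_eq_mul_div, db_w]

lemma vGibbs_nonneg (x : VState n) : 0 ≤ vGibbs n β x := by
  unfold vGibbs
  have : (0:ℝ) < ∑ z : VState n, Real.exp (-β * vH z) :=
    Finset.sum_pos (fun z _ => Real.exp_pos _) ⟨stu n 0, Finset.mem_univ _⟩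
  positivity

lemma vGibbs_sg (x : VState n) : vGibbs n β (sg x) = vGibbs n β x := by
  unfold vGibbs
  rw [vH_sg]

end S17

namespace S17

variable {n : ℕ} {β : ℝ}

lemma sum_odd (h : VState n → ℝ) (hodd : ∀ x, h (sg x) = - h x) :
    ∑ x, h x = 0 := by
  have h1 : ∑ x, h (sgE (n := n) x) = ∑ x, h x := Equiv.sum_comp sgE h
  have h2 : ∑ x, h (sgE (n := n) x) = - ∑ x, h x := by
    rw [← Finset.sum_neg_distrib]
    exact Finset.sum_congr rfl fun x _ => by simpa using hodd x
  linarith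

lemma flip_mulVec (g : VState n → ℝ) (x : VState n) :
    (vFlip n).mulVec g x = g (sg x) := by
  unfold Matrix.mulVec vFlip dotProduct
  rw [Finset.sum_eq_single (sg x)]
  · dsimp only; rw [if_pos (coe_sg x), one_mul]
  · intro y _ hy
    dsimp only; rw [if_neg, zero_mul]
    exact fun hc => hy (Subtype.ext (hc.trans (coe_sg x).symm))
  · simp

lemma K_apply (f : VState n → ℝ) (x : VState n) :
    (vK n β).mulVec f x = ∑ y, vMH n β x y * ((f y + f (sg y)) / 2) := by
  have hflipP : (vFlip n * vMH n β).mulVec f x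
      = ∑ y, vMH n β x y * f (sg y) := by
    rw [← Matrix.mulVec_mulVec, flip_mulVec (fun z => (vMH n β).mulVec f z) x]
    show ∑ y, vMH n β (sg x) y * f y = _
    rw [← Equiv.sum_comp sgE (fun y => vMH n β (sg x) y * f y)]
    exact Finset.sum_congr rfl fun y _ => by
      simp only [sgE_apply, vMH_sg]
  have hPflip : (vMH n β * vFlip n).mulVec f x
      = ∑ y, vMH n β x y * f (sg y) := by
    rw [← Matrix.mulVec_mulVec]
    show ∑ y, vMH n β x y * (vFlip n).mulVec f y = _
    exact Finset.sum_congr rfl fun y _ => by rw [flip_mulVec]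
  have hbase : (vMH n β).mulVec f x = ∑ y, vMH n β x y * f y := rfl
  have : (vK n β).mulVec f x
      = (1/2) * ((vMH n β).mulVec f x) + (1/4) * ((vFlip n * vMH n β).mulVec f x)
        + (1/4) * ((vMH n β * vFlip n).mulVec f x) := by
    unfold vK
    rw [Matrix.add_mulVec, Matrix.add_mulVec, Matrix.smul_mulVec,
      Matrix.smul_mulVec, Matrix.smul_mulVec]
    simp [Pi.add_apply]
  rw [this, hflipP, hPflip, hbase]
  simp only [Finset.mul_sum, ← Finset.sum_add_distrib]
  exact Finset.sum_congr rfl fun y _ => by ring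

lemma dirichlet (g : VState n → ℝ) :
    ∑ x, vGibbs n β x * g x * g x
      - ∑ x, vGibbs n β x * g x * (∑ y, vMH n β x y * g y)
      = (1/2) * ∑ x, ∑ y, vGibbs n β x * vMH n β x y * (g x - g y)^2 := by
  have h1 : ∑ x, ∑ y, vGibbs n β x * vMH n β x y * (g x)^2
      = ∑ x, vGibbs n β x * g x * g x := by
    refine Finset.sum_congr rfl fun x _ => ?_
    have : ∑ y, vGibbs n β x * vMH n β x y * (g x)^2
        = (vGibbs n β x * (g x)^2) * ∑ y, vMH n β x y := by
      rw [Finset.mul_sum]; exact Finset.sum_congr rfl fun y _ => by ring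
    rw [this, rowsum]; ring
  have h2 : ∑ x, ∑ y, vGibbs n β x * vMH n β x y * (g y)^2
      = ∑ x, vGibbs n β x * g x * g x := by
    have hdb : ∀ x y : VState n, vGibbs n β x * vMH n β x y * (g y)^2
        = vGibbs n β y * vMH n β y x * (g y)^2 := fun x y => by rw [db]
    calc ∑ x, ∑ y, vGibbs n β x * vMH n β x y * (g y)^2
        = ∑ x, ∑ y, vGibbs n β y * vMH n β y x * (g y)^2 :=
          Finset.sum_congr rfl fun x _ => Finset.sum_congr rfl fun y _ => hdb x y
      _ = ∑ y, ∑ x, vGibbs n β y * vMH n β y x * (g y)^2 := Finset.sum_comm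
      _ = ∑ y, vGibbs n β y * g y * g y := by
          refine Finset.sum_congr rfl fun y _ => ?_
          have : ∑ x, vGibbs n β y * vMH n β y x * (g y)^2
              = (vGibbs n β y * (g y)^2) * ∑ x, vMH n β y x := by
            rw [Finset.mul_sum]; exact Finset.sum_congr rfl fun x _ => by ring
          rw [this, rowsum]; ring
  have h3 : ∑ x, ∑ y, vGibbs n β x * vMH n β x y * (g x * g y)
      = ∑ x, vGibbs n β x * g x * (∑ y, vMH n β x y * g y) := by
    refine Finset.sum_congr rfl fun x _ => ?_
    rw [Finset.mul_sum]
    exact Finset.sum_congr rfl fun y _ => by ring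
  have key : ∑ x, ∑ y, vGibbs n β x * vMH n β x y * (g x - g y)^2
      = (∑ x, ∑ y, vGibbs n β x * vMH n β x y * (g x)^2)
        - 2 * (∑ x, ∑ y, vGibbs n β x * vMH n β x y * (g x * g y))
        + (∑ x, ∑ y, vGibbs n β x * vMH n β x y * (g y)^2) := by
    simp only [Finset.mul_sum, ← Finset.sum_sub_distrib, ← Finset.sum_add_distrib]
    exact Finset.sum_congr rfl fun x _ => Finset.sum_congr rfl fun y _ => by ring
  rw [key, h1, h2, h3]
  ring

end S17

namespace S17

variable {n : ℕ} {β : ℝ}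

lemma vH_stu {k : ℕ} (hk : k ≤ n) : vH (stu n k) = -(k : ℝ) := by
  rw [vH, coe_stu hk]
  simp [abs_of_nonneg]

lemma stu_ne {k : ℕ} (hk : k + 1 ≤ n) : stu n (k+1) ≠ stu n k := by
  intro h
  have h1 : ((stu n (k+1) : VState n) : ℤ) = ((stu n k : VState n) : ℤ) := by rw [h]
  rw [coe_stu hk, coe_stu (by omega)] at h1
  omega

lemma edge (hk : k + 1 ≤ n) : vMH n β (stu n k) (stu n (k+1)) = 1/2 := by
  rw [vMH, if_neg (stu_ne hk), vProp, if_pos]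
  · rw [vH_stu hk, vH_stu (show k ≤ n by omega)]
    have : max (-((k:ℝ)+1) - -(k:ℝ)) 0 = 0 := by
      rw [max_eq_right]; linarith
    push_cast
    rw [this, mul_zero, Real.exp_zero, mul_one]
  · left
    rw [coe_stu hk, coe_stu (show k ≤ n by omega)]
    push_cast; ring

lemma geom_bound (hβ : 0 < β) (i : ℕ) :
    ∑ k ∈ Finset.range (i+1), Real.exp (β * k)
      ≤ Real.exp (β * i) / (1 - Real.exp (-β)) := by
  set r := Real.exp β with hr
  have hr1 : 1 < r := by
    rw [hr]; calc (1:ℝ) = Real.exp 0 := (Real.exp_zero).symm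
    _ < Real.exp β := Real.exp_lt_exp.mpr hβ
  have hterm : ∀ k : ℕ, Real.exp (β * k) = r ^ k := fun k => by
    rw [hr, ← Real.exp_nat_mul, mul_comm]
  have hδ : 1 - Real.exp (-β) = (r - 1) / r := by
    rw [Real.exp_neg, ← hr]
    field_simp
  have hgs : ∑ k ∈ Finset.range (i+1), r ^ k = (r ^ (i+1) - 1) / (r - 1) :=
    geom_sum_eq (by linarith) (i+1)
  have hrhs : Real.exp (β * i) / (1 - Real.exp (-β)) = r ^ (i+1) / (r - 1) := by
    rw [hterm i, hδ, div_div_eq_mul_div, div_eq_div_iff (by linarith) (by linarith)]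
    ring
  rw [hrhs]
  calc ∑ k ∈ Finset.range (i+1), Real.exp (β * k)
      = (r ^ (i+1) - 1) / (r - 1) := by
        rw [← hgs]; exact Finset.sum_congr rfl fun k _ => hterm k
    _ ≤ r ^ (i+1) / (r - 1) := by
        exact (div_le_div_iff_of_pos_right (by linarith)).mpr (by linarith)

end S17

namespace S17

variable {n : ℕ} {β : ℝ}

lemma wt (x : VState n) : -β * vH x = β * (((x : ℤ).natAbs : ℕ) : ℝ) := by
  rw [vH]
  have h : |(((x : ℤ) : ℝ))| = (((x : ℤ).natAbs : ℕ) : ℝ) := by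
    rw [← Int.cast_abs, Nat.cast_natAbs]
  rw [h]; ring

lemma Zpos : 0 < ∑ z : VState n, Real.exp (-β * vH z) :=
  Finset.sum_pos (fun z _ => Real.exp_pos _) ⟨stu n 0, Finset.mem_univ _⟩

lemma inj_sum_bound (hβ : 0 < β) {i : ℕ} (t : Finset (VState n))
    (hinj : ∀ x ∈ t, ∀ y ∈ t, (x : ℤ).natAbs = (y : ℤ).natAbs → x = y)
    (hle : ∀ x ∈ t, (x : ℤ).natAbs ≤ i) :
    ∑ x ∈ t, Real.exp (β * (((x : ℤ).natAbs : ℕ) : ℝ))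
      ≤ ∑ k ∈ Finset.range (i+1), Real.exp (β * k) := by
  rw [← Finset.sum_image (g := fun x : VState n => (x : ℤ).natAbs)
    (f := fun k : ℕ => Real.exp (β * k)) hinj]
  apply Finset.sum_le_sum_of_subset_of_nonneg
  · intro k hk
    rw [Finset.mem_image] at hk
    obtain ⟨x, hx, rfl⟩ := hk
    exact Finset.mem_range.mpr (by have := hle x hx; omega)
  · intro k _ _; positivity

lemma Ti_bound (hβ : 0 < β) {i : ℕ} (hi : i ≤ n) :
    ∑ x ∈ Finset.univ.filter (fun x : VState n => (x : ℤ).natAbs ≤ i), vGibbs n β x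
      ≤ (3 / (1 - Real.exp (-β))) * vGibbs n β (stu n i) := by
  have hδ : 0 < 1 - Real.exp (-β) := by
    have : Real.exp (-β) < 1 := Real.exp_lt_one_iff.mpr (by linarith)
    linarith
  set s := Finset.univ.filter (fun x : VState n => (x : ℤ).natAbs ≤ i) with hs
  -- numerator bound
  have hA : ∑ x ∈ s, Real.exp (-β * vH x)
      ≤ (3 / (1 - Real.exp (-β))) * Real.exp (β * i) := by
    have hsplit := Finset.sum_filter_add_sum_filter_not s (fun x : VState n => 0 ≤ (x : ℤ))
      (fun x => Real.exp (-β * vH x))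
    have h1 : ∑ x ∈ s.filter (fun x : VState n => 0 ≤ (x : ℤ)), Real.exp (-β * vH x)
        ≤ ∑ k ∈ Finset.range (i+1), Real.exp (β * k) := by
      rw [Finset.sum_congr rfl (fun x _ => by rw [wt x])]
      apply inj_sum_bound hβ
      · intro x hx y hy hxy
        simp only [Finset.mem_filter] at hx hy
        exact Subtype.ext (by omega)
      · intro x hx
        simp only [hs, Finset.mem_filter] at hx
        exact hx.1.2
    have h2 : ∑ x ∈ s.filter (fun x : VState n => ¬ 0 ≤ (x : ℤ)), Real.exp (-β * vH x)
        ≤ ∑ k ∈ Finset.range (i+1), Real.exp (β * k) := by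
      rw [Finset.sum_congr rfl (fun x _ => by rw [wt x])]
      apply inj_sum_bound hβ
      · intro x hx y hy hxy
        simp only [Finset.mem_filter] at hx hy
        exact Subtype.ext (by omega)
      · intro x hx
        simp only [hs, Finset.mem_filter] at hx
        exact hx.1.2
    have hgeo := geom_bound hβ i
    have hpos : 0 < Real.exp (β * i) := Real.exp_pos _
    have : ∑ x ∈ s, Real.exp (-β * vH x) ≤ 2 * (Real.exp (β * i) / (1 - Real.exp (-β))) := by
      linarith
    calc ∑ x ∈ s, Real.exp (-β * vH x)
        ≤ 2 * (Real.exp (β * i) / (1 - Real.exp (-β))) := this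
      _ ≤ (3 / (1 - Real.exp (-β))) * Real.exp (β * i) := by
          rw [div_mul_eq_mul_div, mul_div_assoc]
          apply mul_le_mul_of_nonneg_right (by norm_num) (by positivity)
  -- divide by Z
  have hZ : (0:ℝ) < ∑ z : VState n, Real.exp (-β * vH z) := Zpos
  have hstu : vGibbs n β (stu n i)
      = Real.exp (β * i) / ∑ z : VState n, Real.exp (-β * vH z) := by
    rw [vGibbs]
    congr 1
    rw [vH_stu hi]; ring
  rw [hstu]
  calc ∑ x ∈ s, vGibbs n β x
      = (∑ x ∈ s, Real.exp (-β * vH x)) / (∑ z : VState n, Real.exp (-β * vH z)) := by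
        rw [Finset.sum_div]; rfl
    _ ≤ ((3 / (1 - Real.exp (-β))) * Real.exp (β * i)) / (∑ z : VState n, Real.exp (-β * vH z)) :=
        (div_le_div_iff_of_pos_right hZ).mpr hA
    _ = (3 / (1 - Real.exp (-β))) * (Real.exp (β * i) / ∑ z : VState n, Real.exp (-β * vH z)) := by
        ring

end S17

namespace S17

variable {n : ℕ} {β : ℝ}

lemma g_abs (g : VState n → ℝ) (hgeven : ∀ x, g (sg x) = g x) (x : VState n) :
    g x = g (stu n ((x : ℤ).natAbs)) := by
  rcases le_or_gt 0 (x : ℤ) with h | h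
  · have : stu n ((x : ℤ).natAbs) = x := Subtype.ext (by rw [coe_stu (natAbs_le x)]; omega)
    rw [this]
  · have : stu n ((x : ℤ).natAbs) = sg x :=
      Subtype.ext (by rw [coe_stu (natAbs_le x), coe_sg]; omega)
    rw [this, hgeven]

lemma telescope (a : ℕ → ℝ) {m : ℕ} (hm : m ≤ n) :
    a m - a n = ∑ k ∈ Finset.Ico m n, (a k - a (k+1)) := by
  rw [Finset.sum_Ico_eq_sum_range]
  have h2 : ∑ j ∈ Finset.range (n-m), (a (m+j) - a (m+(j+1))) = a (m+0) - a (m+(n-m)) :=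
    Finset.sum_range_sub' (fun j => a (m+j)) (n-m)
  rw [show m + 0 = m from by omega, show m + (n-m) = n from by omega] at h2
  rw [← h2]
  exact Finset.sum_congr rfl fun j _ => by rw [add_assoc]

lemma poincare (hβ : 0 < β) (g : VState n → ℝ)
    (hgeven : ∀ x, g (sg x) = g x)
    (hgmean : ∑ x, vGibbs n β x * g x = 0) :
    ∑ x, vGibbs n β x * g x * g x
      ≤ (12 * n / (1 - Real.exp (-β))) *
        ∑ k ∈ Finset.range n, vGibbs n β (stu n k) / 4 * (g (stu n k) - g (stu n (k+1)))^2 := by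
  classical
  have hδ : 0 < 1 - Real.exp (-β) := by
    have : Real.exp (-β) < 1 := Real.exp_lt_one_iff.mpr (by linarith)
    linarith
  set π : VState n → ℝ := vGibbs n β with hπ
  set a : ℕ → ℝ := fun k => g (stu n k) with ha
  -- Step 1: variance bound by centering at a n
  have step1 : ∑ x, π x * g x * g x ≤ ∑ x, π x * (g x - a n)^2 := by
    have expand : ∑ x, π x * (g x - a n)^2
        = ∑ x, π x * g x * g x - 2 * a n * (∑ x, π x * g x) + a n^2 * ∑ x, π x := by
      rw [Finset.mul_sum, Finset.mul_sum, ← Finset.sum_sub_distrib, ← Finset.sum_add_distrib]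
      exact Finset.sum_congr rfl fun x _ => by ring
    have hπ0 : 0 ≤ ∑ x, π x := Finset.sum_nonneg fun x _ => vGibbs_nonneg x
    rw [hgmean] at expand
    nlinarith [mul_nonneg (sq_nonneg (a n)) hπ0]
  -- Step 2: pointwise Cauchy-Schwarz along the path
  have step2 : ∀ x : VState n, (g x - a n)^2
      ≤ (n:ℝ) * ∑ k ∈ Finset.Ico ((x : ℤ).natAbs) n, (a k - a (k+1))^2 := by
    intro x
    have hm : (x : ℤ).natAbs ≤ n := natAbs_le x
    have htel : g x - a n = ∑ k ∈ Finset.Ico ((x : ℤ).natAbs) n, (a k - a (k+1)) := by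
      rw [g_abs g hgeven x]
      exact telescope a hm
    rw [htel]
    have hcs := sq_sum_le_card_mul_sum_sq (s := Finset.Ico ((x : ℤ).natAbs) n)
      (f := fun k => a k - a (k+1))
    have hcard : (((Finset.Ico ((x : ℤ).natAbs) n).card : ℕ) : ℝ) ≤ (n:ℝ) := by
      rw [Nat.card_Ico]; exact_mod_cast Nat.sub_le n _
    calc (∑ k ∈ Finset.Ico ((x : ℤ).natAbs) n, (a k - a (k+1)))^2
        ≤ (((Finset.Ico ((x : ℤ).natAbs) n).card : ℕ) : ℝ)
            * ∑ k ∈ Finset.Ico ((x : ℤ).natAbs) n, (a k - a (k+1))^2 := hcs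
      _ ≤ (n:ℝ) * ∑ k ∈ Finset.Ico ((x : ℤ).natAbs) n, (a k - a (k+1))^2 := by
          apply mul_le_mul_of_nonneg_right hcard
          exact Finset.sum_nonneg fun k _ => sq_nonneg _
  -- Step 3: sum over x and swap
  have hIco : ∀ m : ℕ, Finset.Ico m n = (Finset.range n).filter (fun k => m ≤ k) := by
    intro m; ext k
    simp only [Finset.mem_Ico, Finset.mem_filter, Finset.mem_range]
    omega
  have step3 : ∑ x, π x * (g x - a n)^2
      ≤ (n:ℝ) * ∑ k ∈ Finset.range n,
          (∑ x ∈ Finset.univ.filter (fun x : VState n => (x : ℤ).natAbs ≤ k), π x)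
            * (a k - a (k+1))^2 := by
    have h1 : ∑ x, π x * (g x - a n)^2
        ≤ ∑ x : VState n, ∑ k ∈ Finset.range n,
            (if (x : ℤ).natAbs ≤ k then (n:ℝ) * (π x * (a k - a (k+1))^2) else 0) := by
      apply Finset.sum_le_sum
      intro x _
      have hx : π x * (g x - a n)^2
          ≤ π x * ((n:ℝ) * ∑ k ∈ Finset.Ico ((x : ℤ).natAbs) n, (a k - a (k+1))^2) :=
        mul_le_mul_of_nonneg_left (step2 x) (vGibbs_nonneg x)
      refine hx.trans (le_of_eq ?_)
      rw [hIco, Finset.sum_filter, Finset.mul_sum, Finset.mul_sum]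
      refine Finset.sum_congr rfl fun k _ => ?_
      by_cases h : (x : ℤ).natAbs ≤ k
      · simp only [if_pos h]; ring
      · simp only [if_neg h, mul_zero]
    have h2 : ∑ x : VState n, ∑ k ∈ Finset.range n,
          (if (x : ℤ).natAbs ≤ k then (n:ℝ) * (π x * (a k - a (k+1))^2) else 0)
        = (n:ℝ) * ∑ k ∈ Finset.range n,
            (∑ x ∈ Finset.univ.filter (fun x : VState n => (x : ℤ).natAbs ≤ k), π x)
              * (a k - a (k+1))^2 := by
      rw [Finset.sum_comm, Finset.mul_sum]
      refine Finset.sum_congr rfl fun k _ => ?_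
      rw [← Finset.sum_filter, Finset.sum_mul, Finset.mul_sum]
    exact h1.trans (le_of_eq h2)
  -- Step 4: bound the tail weights
  have step4 : ∑ x, π x * g x * g x
      ≤ (n:ℝ) * ∑ k ∈ Finset.range n,
          ((3 / (1 - Real.exp (-β))) * π (stu n k)) * (a k - a (k+1))^2 := by
    refine (step1.trans step3).trans ?_
    apply mul_le_mul_of_nonneg_left ?_ (by positivity)
    apply Finset.sum_le_sum
    intro k hk
    apply mul_le_mul_of_nonneg_right ?_ (sq_nonneg _)
    exact Ti_bound hβ (le_of_lt (Finset.mem_range.mp hk))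
  refine step4.trans (le_of_eq ?_)
  rw [Finset.mul_sum, Finset.mul_sum]
  refine Finset.sum_congr rfl fun k _ => ?_
  field_simp
  ring

end S17

namespace S17

variable {n : ℕ} {β : ℝ}

noncomputable def ev (f : VState n → ℝ) (x : VState n) : ℝ := (f x + f (sg x)) / 2
noncomputable def od (f : VState n → ℝ) (x : VState n) : ℝ := (f x - f (sg x)) / 2

lemma ev_even (f : VState n → ℝ) (x : VState n) : ev f (sg x) = ev f x := by
  unfold ev; rw [sg_invol x]; ring

lemma od_odd (f : VState n → ℝ) (x : VState n) : od f (sg x) = - od f x := by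
  unfold od; rw [sg_invol x]; ring

lemma f_eq (f : VState n → ℝ) (x : VState n) : f x = ev f x + od f x := by
  unfold ev od; ring

lemma Pe_even (f : VState n → ℝ) (x : VState n) :
    ∑ y, vMH n β (sg x) y * ev f y = ∑ y, vMH n β x y * ev f y := by
  rw [← Equiv.sum_comp sgE (fun y => vMH n β (sg x) y * ev f y)]
  exact Finset.sum_congr rfl fun y _ => by
    simp only [sgE_apply, vMH_sg, ev_even]

lemma numeric {δ A B S T nr : ℝ} (hδ : 0 < δ) (hδ1 : δ ≤ 1) (hn1 : 1 ≤ nr)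
    (hA0 : 0 ≤ A) (hB0 : 0 ≤ B) (hS0 : 0 ≤ S) (hT : S ≤ T)
    (hAS : δ * A ≤ 12 * nr * S) (hAB : A + B = 1) :
    δ / (36 * nr ^ 3) ≤ B + T := by
  have hn2 : (1:ℝ) ≤ nr^2 := by nlinarith
  have hn3 : (1:ℝ) ≤ nr^3 := by nlinarith
  have hnn : nr ≤ nr^3 := by nlinarith
  have h36 : (0:ℝ) ≤ 36*nr^3 := by positivity
  rw [div_le_iff₀ (by positivity)]
  nlinarith [mul_nonneg (sub_nonneg.mpr hT) h36,
    mul_nonneg hB0 (by linarith : (0:ℝ) ≤ 36*nr^3 - 1),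
    mul_nonneg hB0 (by linarith : (0:ℝ) ≤ 1 - δ),
    mul_nonneg hS0 (by linarith : (0:ℝ) ≤ 36*nr^3 - 36*nr),
    mul_nonneg (le_of_lt hδ) hA0]

end S17

open S17

/-- the right spectral gap of the double-averaged Metropolis chain on the
bimodal V-shaped Gibbs distribution satisfies `λ(K) ≥ (1 - e^{-β}) / (36 n³)`:
every mean-zero, unit-norm `f ∈ L²(π_β)` has Dirichlet form at least this constant. -/
theorem stmt17 (n : ℕ) (hn : 1 ≤ n) (β : ℝ) (hβ : 0 < β)
    (f : VState n → ℝ)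
    (hmean : ∑ x, vGibbs n β x * f x = 0)
    (hnorm : ∑ x, vGibbs n β x * f x ^ 2 = 1) :
    (1 - Real.exp (-β)) / (36 * (n : ℝ) ^ 3) ≤
      ∑ x, vGibbs n β x * f x * (f x - (vK n β).mulVec f x) := by
  classical
  have hδ : 0 < 1 - Real.exp (-β) := by
    have : Real.exp (-β) < 1 := Real.exp_lt_one_iff.mpr (by linarith)
    linarith
  have hδ1 : 1 - Real.exp (-β) ≤ 1 := by
    have := Real.exp_pos (-β); linarith
  -- abbreviations
  have hKf : ∀ x, (vK n β).mulVec f x = ∑ y, vMH n β x y * ev f y := fun x => K_apply f x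
  -- odd sums vanish
  have hodd1 : ∑ x, vGibbs n β x * ev f x * od f x = 0 := by
    apply sum_odd
    intro x
    rw [vGibbs_sg, ev_even, od_odd]; ring
  have hodd2 : ∑ x, vGibbs n β x * od f x * (∑ y, vMH n β x y * ev f y) = 0 := by
    apply sum_odd
    intro x
    rw [vGibbs_sg, od_odd, Pe_even]; ring
  have hodd3 : ∑ x, vGibbs n β x * od f x = 0 := by
    apply sum_odd
    intro x
    rw [vGibbs_sg, od_odd]; ring
  -- decomposition of the quadratic form
  have hsplitnorm : ∑ x, vGibbs n β x * ev f x * ev f x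
      + ∑ x, vGibbs n β x * od f x * od f x = 1 := by
    have h1 : ∑ x, vGibbs n β x * f x ^ 2
        = ∑ x, (vGibbs n β x * ev f x * ev f x + vGibbs n β x * od f x * od f x
            + 2 * (vGibbs n β x * ev f x * od f x)) := by
      refine Finset.sum_congr rfl fun x _ => ?_
      rw [f_eq f x]; ring
    rw [h1] at hnorm
    rw [Finset.sum_add_distrib, Finset.sum_add_distrib, ← Finset.mul_sum] at hnorm
    rw [hodd1] at hnorm
    linarith
  have hmean_ev : ∑ x, vGibbs n β x * ev f x = 0 := by
    have h1 : ∑ x, vGibbs n β x * f x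
        = ∑ x, (vGibbs n β x * ev f x + vGibbs n β x * od f x) := by
      refine Finset.sum_congr rfl fun x _ => ?_
      rw [f_eq f x]; ring
    rw [h1, Finset.sum_add_distrib, hodd3] at hmean
    linarith
  -- the Dirichlet form identity
  have hD : ∑ x, vGibbs n β x * f x * (f x - (vK n β).mulVec f x)
      = ∑ x, vGibbs n β x * od f x * od f x
        + (1/2) * ∑ x, ∑ y, vGibbs n β x * vMH n β x y * (ev f x - ev f y)^2 := by
    have h1 : ∑ x, vGibbs n β x * f x * (f x - (vK n β).mulVec f x)
        = ∑ x, vGibbs n β x * f x * f x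
          - ∑ x, vGibbs n β x * f x * (∑ y, vMH n β x y * ev f y) := by
      rw [← Finset.sum_sub_distrib]
      refine Finset.sum_congr rfl fun x _ => ?_
      rw [hKf x]; ring
    have h2 : ∑ x, vGibbs n β x * f x * f x
        = ∑ x, vGibbs n β x * ev f x * ev f x
          + ∑ x, vGibbs n β x * od f x * od f x := by
      have : ∑ x, vGibbs n β x * f x * f x
          = ∑ x, (vGibbs n β x * ev f x * ev f x + vGibbs n β x * od f x * od f x
              + 2 * (vGibbs n β x * ev f x * od f x)) := by
        refine Finset.sum_congr rfl fun x _ => ?_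
        rw [f_eq f x]; ring
      rw [this, Finset.sum_add_distrib, Finset.sum_add_distrib, ← Finset.mul_sum, hodd1]
      ring
    have h3 : ∑ x, vGibbs n β x * f x * (∑ y, vMH n β x y * ev f y)
        = ∑ x, vGibbs n β x * ev f x * (∑ y, vMH n β x y * ev f y) := by
      have : ∑ x, vGibbs n β x * f x * (∑ y, vMH n β x y * ev f y)
          = ∑ x, (vGibbs n β x * ev f x * (∑ y, vMH n β x y * ev f y)
              + vGibbs n β x * od f x * (∑ y, vMH n β x y * ev f y)) := by
        refine Finset.sum_congr rfl fun x _ => ?_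
        rw [f_eq f x]; ring
      rw [this, Finset.sum_add_distrib, hodd2, add_zero]
    rw [h1, h2, h3]
    have := dirichlet (n := n) (β := β) (ev f)
    linarith
  -- lower bound the Dirichlet form by the folded-chain edges
  set S : ℝ := ∑ k ∈ Finset.range n,
      vGibbs n β (stu n k) / 4 * (ev f (stu n k) - ev f (stu n (k+1)))^2 with hSdef
  have hS0 : 0 ≤ S := by
    apply Finset.sum_nonneg
    intro k _
    have := vGibbs_nonneg (n := n) (β := β) (stu n k)
    positivity
  have hTS : S ≤ (1/2) * ∑ x, ∑ y, vGibbs n β x * vMH n β x y * (ev f x - ev f y)^2 := by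
    have hF0 : ∀ p : VState n × VState n,
        0 ≤ (1/2) * (vGibbs n β p.1 * vMH n β p.1 p.2 * (ev f p.1 - ev f p.2)^2) := by
      intro p
      by_cases h : p.2 = p.1
      · rw [h, sub_self]; ring_nf; simp
      · have h1 : vMH n β p.1 p.2 = vProp n β p.1 p.2 := by rw [vMH, if_neg h]
        rw [h1]
        have := vGibbs_nonneg (n := n) (β := β) p.1
        have := vProp_nonneg (n := n) (β := β) p.1 p.2
        positivity
    have hrw : (1/2) * ∑ x, ∑ y, vGibbs n β x * vMH n β x y * (ev f x - ev f y)^2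
        = ∑ p : VState n × VState n,
            (1/2) * (vGibbs n β p.1 * vMH n β p.1 p.2 * (ev f p.1 - ev f p.2)^2) := by
      rw [Fintype.sum_prod_type, Finset.mul_sum]
      exact Finset.sum_congr rfl fun x _ => by rw [Finset.mul_sum]
    have hinj : ∀ k ∈ Finset.range n, ∀ k' ∈ Finset.range n,
        ((stu n k, stu n (k+1)) : VState n × VState n) = (stu n k', stu n (k'+1)) → k = k' := by
      intro k hk k' hk' hkk
      have h0 : stu n k = stu n k' := congrArg Prod.fst hkk
      have h1 : ((stu n k : VState n) : ℤ) = ((stu n k' : VState n) : ℤ) := by rw [h0]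
      rw [coe_stu (le_of_lt (Finset.mem_range.mp hk)),
        coe_stu (le_of_lt (Finset.mem_range.mp hk'))] at h1
      omega
    have himg : ∑ k ∈ Finset.range n,
          (1/2) * (vGibbs n β (stu n k) * vMH n β (stu n k) (stu n (k+1))
            * (ev f (stu n k) - ev f (stu n (k+1)))^2)
        ≤ ∑ p : VState n × VState n,
            (1/2) * (vGibbs n β p.1 * vMH n β p.1 p.2 * (ev f p.1 - ev f p.2)^2) := by
      calc ∑ k ∈ Finset.range n,
            (1/2) * (vGibbs n β (stu n k) * vMH n β (stu n k) (stu n (k+1))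
              * (ev f (stu n k) - ev f (stu n (k+1)))^2)
          = ∑ p ∈ (Finset.range n).image
              (fun k => ((stu n k, stu n (k+1)) : VState n × VState n)),
              (1/2) * (vGibbs n β p.1 * vMH n β p.1 p.2 * (ev f p.1 - ev f p.2)^2) :=
            by exact (Finset.sum_image (f := fun p : VState n × VState n =>
              (1/2) * (vGibbs n β p.1 * vMH n β p.1 p.2 * (ev f p.1 - ev f p.2)^2)) hinj).symm
        _ ≤ ∑ p : VState n × VState n,
              (1/2) * (vGibbs n β p.1 * vMH n β p.1 p.2 * (ev f p.1 - ev f p.2)^2) :=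
            Finset.sum_le_sum_of_subset_of_nonneg (Finset.subset_univ _)
              (fun p _ _ => hF0 p)
    have hSeq : S = ∑ k ∈ Finset.range n,
          (1/2) * (vGibbs n β (stu n k) * vMH n β (stu n k) (stu n (k+1))
            * (ev f (stu n k) - ev f (stu n (k+1)))^2) := by
      rw [hSdef]
      refine Finset.sum_congr rfl fun k hk => ?_
      rw [edge (Finset.mem_range.mp hk)]
      ring
    rw [hrw, hSeq]
    exact himg
  -- Poincaré inequality for the even part
  have hpoin : ∑ x, vGibbs n β x * ev f x * ev f x
      ≤ (12 * n / (1 - Real.exp (-β))) * S :=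
    poincare hβ (ev f) (ev_even f) hmean_ev
  -- conclude numerically
  set A : ℝ := ∑ x, vGibbs n β x * ev f x * ev f x with hAdef
  set B : ℝ := ∑ x, vGibbs n β x * od f x * od f x with hBdef
  have hA0 : 0 ≤ A := Finset.sum_nonneg fun x _ => by
    have := vGibbs_nonneg (n := n) (β := β) x
    have h2 : vGibbs n β x * ev f x * ev f x = vGibbs n β x * (ev f x)^2 := by ring
    rw [h2]; positivity
  have hB0 : 0 ≤ B := Finset.sum_nonneg fun x _ => by
    have := vGibbs_nonneg (n := n) (β := β) x
    have h2 : vGibbs n β x * od f x * od f x = vGibbs n β x * (od f x)^2 := by ring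
    rw [h2]; positivity
  have hn1 : (1:ℝ) ≤ (n:ℝ) := by exact_mod_cast hn
  have hAS : (1 - Real.exp (-β)) * A ≤ 12 * (n:ℝ) * S := by
    have h1 := mul_le_mul_of_nonneg_left hpoin (le_of_lt hδ)
    have h2 : (1 - Real.exp (-β)) * ((12 * (n:ℝ) / (1 - Real.exp (-β))) * S)
        = 12 * (n:ℝ) * S := by
      field_simp
    linarith
  rw [hD]
  exact S17.numeric hδ hδ1 hn1 hA0 hB0 hS0 hTS hAS hsplitnorm
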